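/- arXiv:1206.1614 — 3 statements merged into one kernel-verified Lean document; each statement's English description precedes it below -/
import Mathlib

section
/- Let n ≥ 1, let R be an invertible complex n×n matrix, and let τ be a complex n×n matrix with τ* = τ and τ² = 1 (so τ is a self-adjoint unitary involution), where M* denotes conjugate transpose. Assume R* = τ R τ. Let P be the (unique) positive-definite square root of the positive-definite matrix R*R, and set σ = τ R P⁻¹. Then σ is self-adjoint (σ* = σ), unitary (σ*σ = 1), and involutive (σ² = 1). -/
open Matrix
open scoped ComplexOrder

/-- If `R` is an invertible complex `n × n` matrix, `τ` a self-adjoint unitary involution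
with `Rᴴ = τ R τ`, and `P` the positive-definite square root of `Rᴴ R`, then
`σ = τ R P⁻¹` is self-adjoint, unitary and involutive. -/
theorem stmt_2 {n : ℕ} (hn : 1 ≤ n) (R τ P : Matrix (Fin n) (Fin n) ℂ)
    (hR : IsUnit R) (hτsa : τᴴ = τ) (hτ2 : τ * τ = 1)
    (hRτ : Rᴴ = τ * R * τ)
    (hP : P.PosDef) (hPsq : P * P = Rᴴ * R) :
    (τ * R * P⁻¹)ᴴ = τ * R * P⁻¹ ∧
      (τ * R * P⁻¹)ᴴ * (τ * R * P⁻¹) = 1 ∧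
      (τ * R * P⁻¹) * (τ * R * P⁻¹) = 1 := by
  have hPd : IsUnit P.det := P.isUnit_iff_isUnit_det.mp hP.isUnit
  have hPinv : P * P⁻¹ = 1 := mul_nonsing_inv P hPd
  have hPinv' : P⁻¹ * P = 1 := nonsing_inv_mul P hPd
  have hPh : Pᴴ = P := hP.isHermitian.eq
  have hPih : (P⁻¹)ᴴ = P⁻¹ := by rw [conjTranspose_nonsing_inv, hPh]
  -- S = τ R is self-adjoint with S * S = P * P
  have hSh : (τ * R)ᴴ = τ * R := by
    rw [conjTranspose_mul, hτsa, hRτ, mul_assoc, mul_assoc, hτ2, mul_one]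
  have hSS : (τ * R) * (τ * R) = P * P := by
    rw [hPsq, hRτ]; noncomm_ring
  -- conjugate transpose of σ
  have hσh : (τ * R * P⁻¹)ᴴ = P⁻¹ * (τ * R) := by
    rw [conjTranspose_mul, hPih, hSh]
  -- unitarity
  have hu : (τ * R * P⁻¹)ᴴ * (τ * R * P⁻¹) = 1 := by
    rw [hσh]
    calc P⁻¹ * (τ * R) * (τ * R * P⁻¹)
        = P⁻¹ * ((τ * R) * (τ * R)) * P⁻¹ := by noncomm_ring
      _ = P⁻¹ * P * (P * P⁻¹) := by rw [hSS]; noncomm_ring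
      _ = 1 := by rw [hPinv, hPinv', one_mul]
  have hu' : (τ * R * P⁻¹) * (τ * R * P⁻¹)ᴴ = 1 := mul_eq_one_comm.mp hu
  -- σ P σᴴ = P by uniqueness of positive square root
  have hconj : (τ * R * P⁻¹) * P * (τ * R * P⁻¹)ᴴ = P := by
    have h1 : ((τ * R * P⁻¹) * P * (τ * R * P⁻¹)ᴴ).PosSemidef :=
      hP.posSemidef.mul_mul_conjTranspose_same _
    have key : (τ * R * P⁻¹) * P * (τ * R * P⁻¹)ᴴ = (τ * R) * P⁻¹ * (τ * R) := by
      rw [hσh]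
      calc τ * R * P⁻¹ * P * (P⁻¹ * (τ * R))
          = τ * R * ((P⁻¹ * P) * P⁻¹) * (τ * R) := by noncomm_ring
        _ = τ * R * P⁻¹ * (τ * R) := by rw [hPinv', one_mul]
    have h2 : ((τ * R * P⁻¹) * P * (τ * R * P⁻¹)ᴴ) ^ 2 = P ^ 2 := by
      rw [key, pow_two, pow_two]
      calc τ * R * P⁻¹ * (τ * R) * (τ * R * P⁻¹ * (τ * R))
          = (τ * R) * (P⁻¹ * ((τ * R) * (τ * R)) * P⁻¹) * (τ * R) := by noncomm_ring
        _ = (τ * R) * (P⁻¹ * P * (P * P⁻¹)) * (τ * R) := by rw [hSS]; noncomm_ring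
        _ = (τ * R) * (τ * R) := by rw [hPinv, hPinv', one_mul, mul_one]
        _ = P * P := hSS
    open scoped MatrixOrder in exact (CFC.sq_eq_sq_iff _ _ h1.nonneg hP.posSemidef.nonneg).mp h2
  -- commutation: σ P = P σ, i.e. P * σ = τ * R
  have hcomm : P * (τ * R * P⁻¹) = τ * R := by
    have := congrArg (· * (τ * R * P⁻¹)) hconj
    rw [mul_assoc, hu, mul_one] at this
    rw [← this]
    calc τ * R * P⁻¹ * P = τ * R * (P⁻¹ * P) := by noncomm_ring
      _ = τ * R := by rw [hPinv', mul_one]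
  -- self-adjointness
  have hsa : (τ * R * P⁻¹)ᴴ = τ * R * P⁻¹ := by
    rw [hσh]
    calc P⁻¹ * (τ * R) = P⁻¹ * (P * (τ * R * P⁻¹)) := by rw [hcomm]
      _ = (P⁻¹ * P) * (τ * R * P⁻¹) := by noncomm_ring
      _ = τ * R * P⁻¹ := by rw [hPinv', one_mul]
  refine ⟨hsa, hu, ?_⟩
  calc (τ * R * P⁻¹) * (τ * R * P⁻¹) = (τ * R * P⁻¹)ᴴ * (τ * R * P⁻¹) := by rw [hsa]
    _ = 1 := hu
end

section
/- Let V be a finite-dimensional complex inner product space and let a, ψ : V → V be unitary linear maps with a² = id and a ∘ ψ ∘ a = ψ⁻¹. Then dim ker(a − id) − dim ker(a + id) = [dim(ker(a − id) ∩ ker(ψ − id)) − dim(ker(a + id) ∩ ker(ψ − id))] + [dim(ker(a − id) ∩ ker(ψ + id)) − dim(ker(a + id) ∩ ker(ψ + id))]. -/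
open scoped InnerProductSpace
lemma my_split_ker {V : Type*} [AddCommGroup V] [Module ℂ V]
    (f : V →ₗ[ℂ] V) (P Q : Submodule ℂ V) (hPQ : P ⊓ Q = ⊥)
    (hP : ∀ x ∈ P, f x ∈ P) (hQ : ∀ x ∈ Q, f x ∈ Q) :
    LinearMap.ker f ⊓ (P ⊔ Q) = (LinearMap.ker f ⊓ P) ⊔ (LinearMap.ker f ⊓ Q) := by
  apply le_antisymm
  · rintro x ⟨hx0, hxPQ⟩
    obtain ⟨p, hp, q, hq, rfl⟩ := Submodule.mem_sup.mp hxPQ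
    have h1 : f p + f q = 0 := by
      have := LinearMap.mem_ker.mp hx0
      simpa [map_add] using this
    have hfp : f p ∈ P ⊓ Q := ⟨hP p hp, by
      have : f p = -f q := eq_neg_of_add_eq_zero_left h1
      rw [this]; exact Q.neg_mem (hQ q hq)⟩
    rw [hPQ, Submodule.mem_bot] at hfp
    have hfq : f q = 0 := by rw [hfp, zero_add] at h1; exact h1
    exact Submodule.mem_sup.mpr ⟨p, ⟨LinearMap.mem_ker.mpr hfp, hp⟩,
      q, ⟨LinearMap.mem_ker.mpr hfq, hq⟩, rfl⟩
  · exact sup_le (inf_le_inf_left _ le_sup_left) (inf_le_inf_left _ le_sup_right)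

lemma my_finrank_sup {K : Type*} {V : Type*} [DivisionRing K] [AddCommGroup V] [Module K V]
    (s t : Submodule K V) [FiniteDimensional K s] [FiniteDimensional K t] (h : s ⊓ t = ⊥) :
    Module.finrank K ↥(s ⊔ t) = Module.finrank K s + Module.finrank K t := by
  have := Submodule.finrank_sup_add_finrank_inf_eq s t
  rw [h, finrank_bot, add_zero] at this
  exact this

/-- For unitary operators `a`, `ψ` on a finite-dimensional complex inner product space
with `a² = id` and `a ψ a = ψ⁻¹`, the difference `dim ker(a-1) - dim ker(a+1)` equals
the sum of the corresponding differences computed on the `+1` and `-1` eigenspaces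
of `ψ`. -/
theorem stmt_8 {V : Type*} [NormedAddCommGroup V] [InnerProductSpace ℂ V]
    [FiniteDimensional ℂ V] (a : V →ₗ[ℂ] V) (ψ : V ≃ₗ[ℂ] V)
    (ha_unitary : ∀ x y : V, ⟪a x, a y⟫_ℂ = ⟪x, y⟫_ℂ)
    (hψ_unitary : ∀ x y : V, ⟪ψ x, ψ y⟫_ℂ = ⟪x, y⟫_ℂ)
    (ha2 : a ∘ₗ a = LinearMap.id)
    (hrel : a ∘ₗ (ψ : V →ₗ[ℂ] V) ∘ₗ a = (ψ.symm : V →ₗ[ℂ] V)) :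
    (Module.finrank ℂ ↥(LinearMap.ker (a - LinearMap.id)) : ℤ)
        - (Module.finrank ℂ ↥(LinearMap.ker (a + LinearMap.id)) : ℤ)
      = ((Module.finrank ℂ ↥(LinearMap.ker (a - LinearMap.id)
              ⊓ LinearMap.ker ((ψ : V →ₗ[ℂ] V) - LinearMap.id)) : ℤ)
          - (Module.finrank ℂ ↥(LinearMap.ker (a + LinearMap.id)
              ⊓ LinearMap.ker ((ψ : V →ₗ[ℂ] V) - LinearMap.id)) : ℤ))
        + ((Module.finrank ℂ ↥(LinearMap.ker (a - LinearMap.id)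
              ⊓ LinearMap.ker ((ψ : V →ₗ[ℂ] V) + LinearMap.id)) : ℤ)
          - (Module.finrank ℂ ↥(LinearMap.ker (a + LinearMap.id)
              ⊓ LinearMap.ker ((ψ : V →ₗ[ℂ] V) + LinearMap.id)) : ℤ)) := by
  set Kp := LinearMap.ker ((ψ : V →ₗ[ℂ] V) - LinearMap.id) with hKp
  set Km := LinearMap.ker ((ψ : V →ₗ[ℂ] V) + LinearMap.id) with hKm
  set W := Kp ⊔ Km with hW
  set U := Wᗮ with hU
  -- pointwise facts
  have ha2' : ∀ x, a (a x) = x := by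
    intro x
    have := LinearMap.ext_iff.mp ha2 x
    simpa using this
  have haψ : ∀ x, a (ψ x) = ψ.symm (a x) := by
    intro x
    have := LinearMap.ext_iff.mp hrel (a x)
    simpa [ha2' x] using this
  have haψ' : ∀ x, a (ψ.symm x) = ψ (a x) := by
    intro x
    have h := haψ (ψ.symm x)
    simp only [LinearEquiv.apply_symm_apply] at h
    exact (ψ.eq_symm_apply.mp h).symm
  have memKp : ∀ x, x ∈ Kp ↔ ψ x = x := by
    intro x
    simp [hKp, LinearMap.mem_ker, sub_eq_zero]
  have memKm : ∀ x, x ∈ Km ↔ ψ x = -x := by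
    intro x
    simp [hKm, LinearMap.mem_ker, add_eq_zero_iff_eq_neg]
  -- invariance facts
  have hψsKp : ∀ x ∈ Kp, ψ.symm x = x := by
    intro x hx
    rw [memKp] at hx
    conv_lhs => rw [← hx]
    simp
  have hψsKm : ∀ x ∈ Km, ψ.symm x = -x := by
    intro x hx
    rw [memKm] at hx
    have h : ψ (-x) = x := by rw [map_neg, hx, neg_neg]
    calc ψ.symm x = ψ.symm (ψ (-x)) := by rw [h]
    _ = -x := ψ.symm_apply_apply _
  have haKp : ∀ x ∈ Kp, a x ∈ Kp := by
    intro x hx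
    rw [memKp]
    rw [← haψ' x, hψsKp x hx]
  have haKm : ∀ x ∈ Km, a x ∈ Km := by
    intro x hx
    rw [memKm]
    rw [← haψ' x, hψsKm x hx, map_neg]
  have hψKp : ∀ x ∈ Kp, ψ x ∈ Kp := by
    intro x hx
    have h := (memKp x).mp hx
    rw [h]
    exact hx
  have hψKm : ∀ x ∈ Km, ψ x ∈ Km := by
    intro x hx
    have h := (memKm x).mp hx
    rw [h]
    exact Km.neg_mem hx
  have hψsKp' : ∀ x ∈ Kp, ψ.symm x ∈ Kp := by
    intro x hx; rw [hψsKp x hx]; exact hx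
  have hψsKm' : ∀ x ∈ Km, ψ.symm x ∈ Km := by
    intro x hx; rw [hψsKm x hx]; exact Km.neg_mem hx
  have haW : ∀ x ∈ W, a x ∈ W := by
    rintro x hx
    obtain ⟨p, hp, q, hq, rfl⟩ := Submodule.mem_sup.mp hx
    rw [map_add]
    exact Submodule.mem_sup.mpr ⟨a p, haKp p hp, a q, haKm q hq, rfl⟩
  have hψW : ∀ x ∈ W, ψ x ∈ W := by
    rintro x hx
    obtain ⟨p, hp, q, hq, rfl⟩ := Submodule.mem_sup.mp hx
    rw [map_add]
    exact Submodule.mem_sup.mpr ⟨ψ p, hψKp p hp, ψ q, hψKm q hq, rfl⟩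
  have hψsW : ∀ x ∈ W, ψ.symm x ∈ W := by
    rintro x hx
    obtain ⟨p, hp, q, hq, rfl⟩ := Submodule.mem_sup.mp hx
    rw [map_add]
    exact Submodule.mem_sup.mpr ⟨ψ.symm p, hψsKp' p hp, ψ.symm q, hψsKm' q hq, rfl⟩
  have haU : ∀ x ∈ U, a x ∈ U := by
    intro x hx
    rw [hU, Submodule.mem_orthogonal] at hx ⊢
    intro w hw
    calc ⟪w, a x⟫_ℂ = ⟪a (a w), a x⟫_ℂ := by rw [ha2']
    _ = ⟪a w, x⟫_ℂ := ha_unitary _ _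
    _ = 0 := hx _ (haW w hw)
  have hψU : ∀ x ∈ U, ψ x ∈ U := by
    intro x hx
    rw [hU, Submodule.mem_orthogonal] at hx ⊢
    intro w hw
    calc ⟪w, ψ x⟫_ℂ = ⟪ψ (ψ.symm w), ψ x⟫_ℂ := by rw [ψ.apply_symm_apply]
    _ = ⟪ψ.symm w, x⟫_ℂ := hψ_unitary _ _
    _ = 0 := hx _ (hψsW w hw)
  have hψsU : ∀ x ∈ U, ψ.symm x ∈ U := by
    intro x hx
    rw [hU, Submodule.mem_orthogonal] at hx ⊢
    intro w hw
    calc ⟪w, ψ.symm x⟫_ℂ = ⟪ψ w, ψ (ψ.symm x)⟫_ℂ := (hψ_unitary _ _).symm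
    _ = ⟪ψ w, x⟫_ℂ := by rw [ψ.apply_symm_apply]
    _ = 0 := hx _ (hψW w hw)
  -- disjointness and covering
  have hKpm : Kp ⊓ Km = ⊥ := by
    rw [eq_bot_iff]
    intro x hx
    obtain ⟨h1, h2⟩ := Submodule.mem_inf.mp hx
    replace h1 := (memKp x).mp h1
    replace h2 := (memKm x).mp h2
    have hxx : x = -x := h1.symm.trans h2
    have h2x : (2 : ℂ) • x = 0 := by
      rw [two_smul]
      nth_rewrite 1 [hxx]
      simp
    have hx0 : x = 0 := by
      rcases smul_eq_zero.mp h2x with h | h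
      · exact absurd h two_ne_zero
      · exact h
    simp [hx0]
  have hWU : W ⊓ U = ⊥ := (Submodule.orthogonal_disjoint W).eq_bot
  have hWUtop : W ⊔ U = ⊤ := Submodule.isCompl_orthogonal_of_hasOrthogonalProjection.codisjoint.eq_top
  -- the operator S = ψ - ψ⁻¹
  set S : V →ₗ[ℂ] V := (ψ : V →ₗ[ℂ] V) - (ψ.symm : V →ₗ[ℂ] V) with hS
  have hSapp : ∀ x, S x = ψ x - ψ.symm x := fun x => rfl
  have haS : ∀ x, a (S x) = - S (a x) := by
    intro x
    rw [hSapp, hSapp, map_sub, haψ, haψ', neg_sub]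
  have hSU : ∀ x ∈ U, S x ∈ U := by
    intro x hx
    rw [hSapp]
    exact U.sub_mem (hψU x hx) (hψsU x hx)
  have hSinj : ∀ x ∈ U, S x = 0 → x = 0 := by
    intro x hxU hSx
    rw [hSapp, sub_eq_zero] at hSx
    have hψ2 : ψ (ψ x) = x := by rw [hSx, ψ.apply_symm_apply]
    have h1 : ((2 : ℂ)⁻¹) • (x + ψ x) ∈ Kp := by
      rw [memKp, map_smul, map_add, hψ2, add_comm]
    have h2 : ((2 : ℂ)⁻¹) • (x - ψ x) ∈ Km := by
      rw [memKm, map_smul, map_sub, hψ2, ← smul_neg, neg_sub]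
    have hxW : x ∈ W := by
      have hxeq : x = ((2 : ℂ)⁻¹) • (x + ψ x) + ((2 : ℂ)⁻¹) • (x - ψ x) := by
        rw [← smul_add]
        have : x + ψ x + (x - ψ x) = (2 : ℂ) • x := by
          rw [two_smul]; abel
        rw [this, smul_smul]
        norm_num
      rw [hxeq]
      exact Submodule.mem_sup.mpr ⟨_, h1, _, h2, rfl⟩
    have : x ∈ W ⊓ U := ⟨hxW, hxU⟩
    rwa [hWU, Submodule.mem_bot] at this
  -- equality of dimensions on U
  set Ap := LinearMap.ker (a - LinearMap.id) with hAp
  set Am := LinearMap.ker (a + LinearMap.id) with hAm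
  have memAp : ∀ x, x ∈ Ap ↔ a x = x := by
    intro x; simp [hAp, LinearMap.mem_ker, sub_eq_zero]
  have memAm : ∀ x, x ∈ Am ↔ a x = -x := by
    intro x; simp [hAm, LinearMap.mem_ker, add_eq_zero_iff_eq_neg]
  have hSpm : ∀ x ∈ Ap ⊓ U, S x ∈ Am ⊓ U := by
    intro x hx
    obtain ⟨hxA, hxU⟩ := Submodule.mem_inf.mp hx
    refine Submodule.mem_inf.mpr ⟨?_, hSU x hxU⟩
    refine (memAm (S x)).mpr ?_
    rw [haS, (memAp x).mp hxA]
  have hSmp : ∀ x ∈ Am ⊓ U, S x ∈ Ap ⊓ U := by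
    intro x hx
    obtain ⟨hxA, hxU⟩ := Submodule.mem_inf.mp hx
    refine Submodule.mem_inf.mpr ⟨?_, hSU x hxU⟩
    refine (memAp (S x)).mpr ?_
    rw [haS, (memAm x).mp hxA, map_neg, neg_neg]
  have keyle : ∀ (P Q : Submodule ℂ V), (∀ x ∈ P ⊓ U, S x ∈ Q ⊓ U) →
      Module.finrank ℂ ↥(P ⊓ U) ≤ Module.finrank ℂ ↥(Q ⊓ U) := by
    intro P Q h
    apply LinearMap.finrank_le_finrank_of_injective (f := S.restrict h)
    rw [← LinearMap.ker_eq_bot, eq_bot_iff]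
    rintro ⟨x, hx⟩ hker
    have hx0 : S x = 0 := by
      have h := LinearMap.mem_ker.mp hker
      rw [Subtype.ext_iff, LinearMap.restrict_apply] at h
      exact h
    have hxz := hSinj x (Submodule.mem_inf.mp hx).2 hx0
    rw [Submodule.mem_bot]
    exact Subtype.ext hxz
  have key : Module.finrank ℂ ↥(Ap ⊓ U) = Module.finrank ℂ ↥(Am ⊓ U) :=
    le_antisymm (keyle Ap Am hSpm) (keyle Am Ap hSmp)
  -- dimension count
  have decomp : ∀ f : V →ₗ[ℂ] V, (∀ x ∈ Kp, f x ∈ Kp) → (∀ x ∈ Km, f x ∈ Km) →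
      (∀ x ∈ U, f x ∈ U) →
      Module.finrank ℂ ↥(LinearMap.ker f)
        = Module.finrank ℂ ↥(LinearMap.ker f ⊓ Kp) + Module.finrank ℂ ↥(LinearMap.ker f ⊓ Km)
          + Module.finrank ℂ ↥(LinearMap.ker f ⊓ U) := by
    intro f hfp hfm hfU
    have hfW : ∀ x ∈ W, f x ∈ W := by
      rintro x hx
      obtain ⟨p, hp, q, hq, rfl⟩ := Submodule.mem_sup.mp hx
      rw [map_add]
      exact Submodule.mem_sup.mpr ⟨f p, hfp p hp, f q, hfm q hq, rfl⟩
    have e1 : LinearMap.ker f = (LinearMap.ker f ⊓ W) ⊔ (LinearMap.ker f ⊓ U) := by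
      rw [← my_split_ker f W U hWU hfW hfU, hWUtop, inf_top_eq]
    have e2 : LinearMap.ker f ⊓ W = (LinearMap.ker f ⊓ Kp) ⊔ (LinearMap.ker f ⊓ Km) := by
      rw [hW]
      exact my_split_ker f Kp Km hKpm hfp hfm
    have d1 : (LinearMap.ker f ⊓ W) ⊓ (LinearMap.ker f ⊓ U) = ⊥ := by
      rw [eq_bot_iff, ← hWU]
      rintro x ⟨⟨_, h1⟩, ⟨_, h2⟩⟩
      exact ⟨h1, h2⟩
    have d2 : (LinearMap.ker f ⊓ Kp) ⊓ (LinearMap.ker f ⊓ Km) = ⊥ := by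
      rw [eq_bot_iff, ← hKpm]
      rintro x ⟨⟨_, h1⟩, ⟨_, h2⟩⟩
      exact ⟨h1, h2⟩
    calc Module.finrank ℂ ↥(LinearMap.ker f)
        = Module.finrank ℂ ↥((LinearMap.ker f ⊓ W) ⊔ (LinearMap.ker f ⊓ U)) := by rw [← e1]
      _ = Module.finrank ℂ ↥(LinearMap.ker f ⊓ W) + Module.finrank ℂ ↥(LinearMap.ker f ⊓ U) :=
          my_finrank_sup _ _ d1
      _ = _ := by
          rw [e2, my_finrank_sup _ _ d2]
  have hfUp : ∀ x ∈ U, ((a - LinearMap.id : V →ₗ[ℂ] V) : V → V) x ∈ U := by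
    intro x hx
    simp only [LinearMap.sub_apply, LinearMap.id_apply]
    exact U.sub_mem (haU x hx) hx
  have hfUm : ∀ x ∈ U, ((a + LinearMap.id : V →ₗ[ℂ] V) : V → V) x ∈ U := by
    intro x hx
    simp only [LinearMap.add_apply, LinearMap.id_apply]
    exact U.add_mem (haU x hx) hx
  have hfKpp : ∀ x ∈ Kp, ((a - LinearMap.id : V →ₗ[ℂ] V) : V → V) x ∈ Kp := by
    intro x hx
    simp only [LinearMap.sub_apply, LinearMap.id_apply]
    exact Kp.sub_mem (haKp x hx) hx
  have hfKpm : ∀ x ∈ Km, ((a - LinearMap.id : V →ₗ[ℂ] V) : V → V) x ∈ Km := by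
    intro x hx
    simp only [LinearMap.sub_apply, LinearMap.id_apply]
    exact Km.sub_mem (haKm x hx) hx
  have hfKmp : ∀ x ∈ Kp, ((a + LinearMap.id : V →ₗ[ℂ] V) : V → V) x ∈ Kp := by
    intro x hx
    simp only [LinearMap.add_apply, LinearMap.id_apply]
    exact Kp.add_mem (haKp x hx) hx
  have hfKmm : ∀ x ∈ Km, ((a + LinearMap.id : V →ₗ[ℂ] V) : V → V) x ∈ Km := by
    intro x hx
    simp only [LinearMap.add_apply, LinearMap.id_apply]
    exact Km.add_mem (haKm x hx) hx
  have dp := decomp (a - LinearMap.id) hfKpp hfKpm hfUp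
  have dm := decomp (a + LinearMap.id) hfKmp hfKmm hfUm
  have dp' : Module.finrank ℂ ↥Ap = Module.finrank ℂ ↥(Ap ⊓ Kp) + Module.finrank ℂ ↥(Ap ⊓ Km)
      + Module.finrank ℂ ↥(Ap ⊓ U) := dp
  have dm' : Module.finrank ℂ ↥Am = Module.finrank ℂ ↥(Am ⊓ Kp) + Module.finrank ℂ ↥(Am ⊓ Km)
      + Module.finrank ℂ ↥(Am ⊓ U) := dm
  rw [dp', dm', key]
  push_cast
  ring
end

section
/- Let V be a finite-dimensional complex inner product space and let a, ψ : V → V be unitary linear maps with a² = id and a ∘ ψ ∘ a = ψ⁻¹. Assume that −1 is not an eigenvalue of ψ, i.e. ker(ψ + id) = {0}. Then dim ker(a − id) − dim ker(a + id) = dim(ker(a − id) ∩ ker(ψ − id)) − dim(ker(a + id) ∩ ker(ψ − id)). -/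
open scoped InnerProductSpace

/-- For unitary operators `a`, `ψ` on a finite-dimensional complex inner product space
with `a² = id`, `a ψ a = ψ⁻¹`, and `-1` not an eigenvalue of `ψ`, one has
`dim ker(a-1) - dim ker(a+1)
  = dim (ker(a-1) ∩ ker(ψ-1)) - dim (ker(a+1) ∩ ker(ψ-1))`. -/
theorem stmt_9 {V : Type*} [NormedAddCommGroup V] [InnerProductSpace ℂ V]
    [FiniteDimensional ℂ V] (a : V →ₗ[ℂ] V) (ψ : V ≃ₗ[ℂ] V)
    (ha_unitary : ∀ x y : V, ⟪a x, a y⟫_ℂ = ⟪x, y⟫_ℂ)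
    (hψ_unitary : ∀ x y : V, ⟪ψ x, ψ y⟫_ℂ = ⟪x, y⟫_ℂ)
    (ha2 : a ∘ₗ a = LinearMap.id)
    (hrel : a ∘ₗ (ψ : V →ₗ[ℂ] V) ∘ₗ a = (ψ.symm : V →ₗ[ℂ] V))
    (hno : LinearMap.ker ((ψ : V →ₗ[ℂ] V) + LinearMap.id) = ⊥) :
    (Module.finrank ℂ ↥(LinearMap.ker (a - LinearMap.id)) : ℤ)
        - (Module.finrank ℂ ↥(LinearMap.ker (a + LinearMap.id)) : ℤ)
      = (Module.finrank ℂ ↥(LinearMap.ker (a - LinearMap.id)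
            ⊓ LinearMap.ker ((ψ : V →ₗ[ℂ] V) - LinearMap.id)) : ℤ)
        - (Module.finrank ℂ ↥(LinearMap.ker (a + LinearMap.id)
            ⊓ LinearMap.ker ((ψ : V →ₗ[ℂ] V) - LinearMap.id)) : ℤ) := by
  -- pointwise versions of the hypotheses
  have haa : ∀ v : V, a (a v) = v := fun v => by
    have := LinearMap.congr_fun ha2 v; simpa using this
  have hrel' : ∀ v : V, a (ψ (a v)) = ψ.symm v := fun v => by
    have := LinearMap.congr_fun hrel v; simpa using this
  have h1 : ∀ v : V, ψ (a v) = a (ψ.symm v) := fun v => by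
    rw [← hrel' v, haa]
  have h2 : ∀ v : V, ψ.symm (a v) = a (ψ v) := fun v => by
    have h := h1 (a v)
    rw [haa] at h
    rw [h, haa]
  -- the skew-adjoint operator T = ψ - ψ⁻¹
  set T : V →ₗ[ℂ] V := (ψ : V →ₗ[ℂ] V) - (ψ.symm : V →ₗ[ℂ] V) with hTdef
  have hTapp : ∀ v : V, T v = ψ v - ψ.symm v := fun v => by
    simp [hTdef]
  have hTa : ∀ v : V, T (a v) = - a (T v) := fun v => by
    rw [hTapp, hTapp, h1, h2, map_sub]
    abel
  -- kernel of T is the fixed space of ψ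
  have hkerT : LinearMap.ker T
      = LinearMap.ker ((ψ : V →ₗ[ℂ] V) - LinearMap.id) := by
    ext v
    simp only [LinearMap.mem_ker, hTapp, LinearMap.sub_apply, LinearMap.id_apply,
      LinearEquiv.coe_coe]
    constructor
    · intro h
      rw [sub_eq_zero] at h
      have hsq : ψ (ψ v) = v := by rw [h]; simp
      have hmem : ψ v - v ∈ LinearMap.ker ((ψ : V →ₗ[ℂ] V) + LinearMap.id) := by
        simp only [LinearMap.mem_ker, LinearMap.add_apply, LinearMap.id_apply,
          LinearEquiv.coe_coe, map_sub, hsq]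
        abel
      rw [hno, Submodule.mem_bot, sub_eq_zero] at hmem
      rw [hmem]; abel
    · intro h
      rw [sub_eq_zero] at h
      have h' : ψ.symm v = v := by
        simpa using (congrArg ψ.symm h).symm
      rw [h, h', sub_self]
  -- T is skew-adjoint
  have hskew : ∀ x y : V, ⟪T x, y⟫_ℂ = -⟪x, T y⟫_ℂ := by
    intro x y
    have e1 : ∀ u w : V, ⟪ψ u, w⟫_ℂ = ⟪u, ψ.symm w⟫_ℂ := fun u w => by
      have := hψ_unitary u (ψ.symm w); simpa using this
    have e2 : ∀ u w : V, ⟪ψ.symm u, w⟫_ℂ = ⟪u, ψ w⟫_ℂ := fun u w => by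
      have := hψ_unitary (ψ.symm u) w; simpa using this.symm
    rw [hTapp, hTapp, inner_sub_left, inner_sub_right, e1, e2]
    ring
  set W : Submodule ℂ V := LinearMap.ker T with hWdef
  set U : Submodule ℂ V := LinearMap.range T with hUdef
  -- W and U are complementary
  have hWU_bot : W ⊓ U = ⊥ := by
    rw [eq_bot_iff]
    rintro x ⟨hxW, y, rfl⟩
    have hx0 : T (T y) = 0 := hxW
    have : ⟪T y, T y⟫_ℂ = 0 := by
      rw [hskew y (T y), hx0, inner_zero_right, neg_zero]
    rw [inner_self_eq_zero] at this
    simp [this]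
  have hWU_top : W ⊔ U = ⊤ :=
    Submodule.eq_top_of_disjoint W U
      (by rw [add_comm]; exact (LinearMap.finrank_range_add_finrank_ker T).ge)
      (disjoint_iff.mpr hWU_bot)
  -- a preserves W and U
  have haW : ∀ v ∈ W, a v ∈ W := by
    intro v hv
    have hv0 : T v = 0 := hv
    show T (a v) = 0
    rw [hTa, hv0, map_zero, neg_zero]
  have haU : ∀ v ∈ U, a v ∈ U := by
    rintro v ⟨y, rfl⟩
    exact ⟨-(a y), by rw [map_neg, hTa]; simp [haa]⟩
  -- eigenvalue splitting lemma
  have splitK : ∀ (K : Submodule ℂ V) (s : ℂ), (∀ v : V, v ∈ K ↔ a v = s • v) →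
      Module.finrank ℂ K
        = Module.finrank ℂ ↥(K ⊓ W) + Module.finrank ℂ ↥(K ⊓ U) := by
    intro K s hK
    have hle : K ≤ (K ⊓ W) ⊔ (K ⊓ U) := by
      intro v hv
      have hvtop : v ∈ W ⊔ U := by rw [hWU_top]; trivial
      obtain ⟨w, hw, u, hu, rfl⟩ := Submodule.mem_sup.mp hvtop
      have hav : a w + a u = s • w + s • u := by
        have h := (hK _).mp hv
        simpa [map_add, smul_add] using h
      have hwu : a w - s • w = s • u - a u := by
        rw [sub_eq_sub_iff_add_eq_add, hav]
        abel
      have hmemW : a w - s • w ∈ W := W.sub_mem (haW w hw) (W.smul_mem s hw)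
      have hmemU : a w - s • w ∈ U := by
        rw [hwu]; exact U.sub_mem (U.smul_mem s hu) (haU u hu)
      have h0 : a w - s • w = 0 := by
        have : a w - s • w ∈ W ⊓ U := ⟨hmemW, hmemU⟩
        rwa [hWU_bot, Submodule.mem_bot] at this
      have hw' : a w = s • w := by rwa [sub_eq_zero] at h0
      have hu' : a u = s • u := by
        have h0' : s • u - a u = 0 := by rw [← hwu, h0]
        rw [sub_eq_zero] at h0'; exact h0'.symm
      exact Submodule.mem_sup.mpr
        ⟨w, ⟨(hK w).mpr hw', hw⟩, u, ⟨(hK u).mpr hu', hu⟩, rfl⟩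
    have heq : (K ⊓ W) ⊔ (K ⊓ U) = K :=
      le_antisymm (sup_le inf_le_left inf_le_left) hle
    have hd : (K ⊓ W) ⊓ (K ⊓ U) = ⊥ := by
      rw [eq_bot_iff, ← hWU_bot]
      exact inf_le_inf inf_le_right inf_le_right
    have hfr := Submodule.finrank_sup_add_finrank_inf_eq (K ⊓ W) (K ⊓ U)
    rw [heq, hd] at hfr
    simpa using hfr
  -- the two eigenspaces of a
  have hKp : ∀ v : V, v ∈ LinearMap.ker (a - LinearMap.id) ↔ a v = (1 : ℂ) • v := by
    intro v
    simp [LinearMap.mem_ker, sub_eq_zero]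
  have hKm : ∀ v : V, v ∈ LinearMap.ker (a + LinearMap.id) ↔ a v = (-1 : ℂ) • v := by
    intro v
    simp [LinearMap.mem_ker, add_eq_zero_iff_eq_neg]
  -- T gives an isomorphism between the U-parts of the two eigenspaces
  have hle2 : ∀ P Q : Submodule ℂ V, P ≤ U → (∀ x ∈ P, T x ∈ Q) →
      Module.finrank ℂ P ≤ Module.finrank ℂ Q := by
    intro P Q hPU hPQ
    have hinj : Function.Injective (T.restrict hPQ) := by
      rw [← LinearMap.ker_eq_bot, eq_bot_iff]
      rintro ⟨x, hx⟩ hker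
      have hTx : T x = 0 := by
        have := congrArg (Subtype.val) (LinearMap.mem_ker.mp hker)
        simpa [LinearMap.restrict_apply] using this
      have : x ∈ W ⊓ U := ⟨hTx, hPU hx⟩
      rw [hWU_bot, Submodule.mem_bot] at this
      simp [this]
    exact LinearMap.finrank_le_finrank_of_injective hinj
  have hUeq : Module.finrank ℂ ↥(LinearMap.ker (a - LinearMap.id) ⊓ U)
      = Module.finrank ℂ ↥(LinearMap.ker (a + LinearMap.id) ⊓ U) := by
    apply le_antisymm
    · apply hle2 _ _ inf_le_right
      rintro x ⟨hx1, hxU⟩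
      refine ⟨(hKm _).mpr ?_, ⟨x, rfl⟩⟩
      have hax : a x = x := by simpa using (hKp x).mp hx1
      have h := hTa x
      rw [hax] at h
      have h' : a (T x) = -T x := by
        conv_rhs => rw [h, neg_neg]
      simp [h']
    · apply hle2 _ _ inf_le_right
      rintro x ⟨hx1, hxU⟩
      refine ⟨(hKp _).mpr ?_, ⟨x, rfl⟩⟩
      have hax : a x = -x := by simpa using (hKm x).mp hx1
      have h := hTa x
      rw [hax, map_neg] at h
      have h' : a (T x) = T x := (neg_injective h).symm
      simp [h']
  have ep := splitK (LinearMap.ker (a - LinearMap.id)) 1 hKp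
  have em := splitK (LinearMap.ker (a + LinearMap.id)) (-1) hKm
  rw [hkerT] at ep em
  omega
end
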